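/- Let F : C → D be a functor between small categories, each with < κ limits, such that F preserves them, and let a denote sheafification for a Grothendieck topology on D whose covering sieves form a κ-filtered poset under refinement on each object. If the topology's plus-construction on D is computed by κ-filtered colimits over covering sieves, then the composite of the Yoneda embedding with sheafification, ay : D → Sh(D), preserves < κ limits. -/

import Mathlib

open CategoryTheory CategoryTheory.Limits Cardinal

open CategoryTheory CategoryTheory.Category CategoryTheory.Limits
  CategoryTheory.Limits.Types CategoryTheory.Limits.Types.FilteredColimit Cardinal

namespace AyAux

section Core

variable {κ : Cardinal.{0}} (hκ : κ.IsRegular)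
variable {J K : Type} [SmallCategory J] [SmallCategory K]
variable (thin : ∀ a b : K, Subsingleton (a ⟶ b))
variable (hdir : ∀ s : Set K, #s < κ → ∃ i, ∀ j ∈ s, Nonempty (j ⟶ i))
variable (hJ : #(Σ a b : J, a ⟶ b) < κ)

include hκ thin hdir in
theorem isFiltered_of_dir : IsFiltered K := by
  have hub : ∀ s : Set K, s.Finite → ∃ i, ∀ j ∈ s, Nonempty (j ⟶ i) := fun s hs =>
    hdir s (lt_of_lt_of_le hs.lt_aleph0 hκ.aleph0_le)
  haveI : IsFilteredOrEmpty K := by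
    constructor
    · intro a b
      obtain ⟨i, hi⟩ := hub {a, b} ((Set.finite_singleton _).insert _)
      exact ⟨i, (hi a (by simp)).some, (hi b (by simp)).some, trivial⟩
    · intro a b f g
      obtain ⟨i, hi⟩ := hub {b} (Set.finite_singleton _)
      have h := (hi b (by simp)).some
      haveI := thin a i
      exact ⟨i, h, Subsingleton.elim _ _⟩
  obtain ⟨i, _⟩ := hub ∅ Set.finite_empty
  haveI : Nonempty K := ⟨i⟩
  exact ⟨⟩

include hJ in
theorem mk_J_lt : #J < κ :=
  lt_of_le_of_lt (mk_le_of_injective (f := fun j => (⟨j, j, 𝟙 j⟩ : Σ a b : J, a ⟶ b))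
    (fun a b h => congrArg (fun x => x.1) h)) hJ

variable (F : J × K ⥤ Type)

include hκ thin hdir hJ in
theorem inj : Function.Injective (colimitLimitToLimitColimit F) := by
  classical
  haveI := isFiltered_of_dir hκ thin hdir
  intro x y h
  obtain ⟨kx, x, rfl⟩ := jointly_surjective' x
  obtain ⟨ky, y, rfl⟩ := jointly_surjective' y
  dsimp at x y
  replace h := fun j => congr_arg (limit.π (Functor.curry.obj F ⋙ colim) j) h
  simp only [Functor.comp_obj, colim_obj, ι_colimitLimitToLimitColimit_π_apply,
    Types.FilteredColimit.colimit_eq_iff, Functor.curry_obj_obj_obj, Functor.curry_obj_obj_map] at h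
  let k : J → K := fun j => (h j).choose
  let f : ∀ j, kx ⟶ k j := fun j => (h j).choose_spec.choose
  let g : ∀ j, ky ⟶ k j := fun j => (h j).choose_spec.choose_spec.choose
  have w : ∀ j,
      F.map ((𝟙 j, f j) : (j, kx) ⟶ (j, k j))
          (limit.π ((Functor.curry.obj (CategoryTheory.Prod.swap K J ⋙ F)).obj kx) j x) =
        F.map ((𝟙 j, g j) : (j, ky) ⟶ (j, k j))
          (limit.π ((Functor.curry.obj (CategoryTheory.Prod.swap K J ⋙ F)).obj ky) j y) :=
    fun j => (h j).choose_spec.choose_spec.choose_spec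
  have hcard : #(insert kx (insert ky (Set.range k)) : Set K) < κ := by
    have h1 : #(Set.range k) < κ := lt_of_le_of_lt mk_range_le (mk_J_lt hJ)
    have h2 : (1 : Cardinal) < κ := one_lt_aleph0.trans_le hκ.aleph0_le
    have i1 : #(insert ky (Set.range k) : Set K) < κ :=
      mk_insert_le.trans_lt (add_lt_of_lt hκ.aleph0_le h1 h2)
    exact mk_insert_le.trans_lt (add_lt_of_lt hκ.aleph0_le i1 h2)
  obtain ⟨S, hS⟩ := hdir (insert kx (insert ky (Set.range k))) hcard
  obtain ⟨tx⟩ := hS kx (by simp)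
  obtain ⟨ty⟩ := hS ky (by simp)
  have t : ∀ j, k j ⟶ S := fun j => (hS (k j) (by simp)).some
  apply colimit_sound' tx ty
  ext j
  simp only [Functor.comp_map, Limit.map_π_apply, Functor.curry_obj_map_app, CategoryTheory.Prod.swap_map]
  haveI := thin kx S
  haveI := thin ky S
  rw [Subsingleton.elim tx (f j ≫ t j), Subsingleton.elim ty (g j ≫ t j)]
  have e1 : ∀ (kz : K) (u : kz ⟶ S) (z : limit ((Functor.curry.obj (CategoryTheory.Prod.swap K J ⋙ F)).obj kz)),
      limit.π ((Functor.curry.obj (CategoryTheory.Prod.swap K J ⋙ F)).obj S) j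
        (Limits.lim.map ((Functor.curry.obj (CategoryTheory.Prod.swap K J ⋙ F)).map u) z) =
      F.map ((𝟙 j, u) : (j, kz) ⟶ (j, S))
        (limit.π ((Functor.curry.obj (CategoryTheory.Prod.swap K J ⋙ F)).obj kz) j z) := by
    intro kz u z
    exact Limit.map_π_apply _ _ _
  rw [e1, e1]
  have c1 : ((𝟙 j, f j ≫ t j) : (j, kx) ⟶ (j, S)) =
      (((𝟙 j, f j) : (j, kx) ⟶ (j, k j)) ≫ ((𝟙 j, t j) : (j, k j) ⟶ (j, S)) : (j, kx) ⟶ (j, S)) := by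
    simp
  have c2 : ((𝟙 j, g j ≫ t j) : (j, ky) ⟶ (j, S)) =
      (((𝟙 j, g j) : (j, ky) ⟶ (j, k j)) ≫ ((𝟙 j, t j) : (j, k j) ⟶ (j, S)) : (j, ky) ⟶ (j, S)) := by
    simp
  rw [c1, c2, FunctorToTypes.map_comp_apply, FunctorToTypes.map_comp_apply, w j]

include hκ thin hdir hJ in
theorem surj : Function.Surjective (colimitLimitToLimitColimit F) := by
  classical
  haveI := isFiltered_of_dir hκ thin hdir
  intro x
  have z := fun j => jointly_surjective' (limit.π (Functor.curry.obj F ⋙ Limits.colim) j x)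
  let k : J → K := fun j => (z j).choose
  let y : ∀ j, F.obj (j, k j) := fun j => (z j).choose_spec.choose
  have e : ∀ j,
      colimit.ι ((Functor.curry.obj F).obj j) (k j) (y j) = limit.π (Functor.curry.obj F ⋙ Limits.colim) j x :=
    fun j => (z j).choose_spec.choose_spec
  clear_value k y
  clear z
  obtain ⟨k', hk'⟩ := hdir (Set.range k) (lt_of_le_of_lt mk_range_le (mk_J_lt hJ))
  have g : ∀ j, k j ⟶ k' := fun j => (hk' (k j) (Set.mem_range_self j)).some
  have w : ∀ {j j' : J} (f : j ⟶ j'),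
      colimit.ι ((Functor.curry.obj F).obj j') k' (F.map ((𝟙 j', g j') : (j', k j') ⟶ (j', k')) (y j')) =
        colimit.ι ((Functor.curry.obj F).obj j') k' (F.map ((f, g j) : (j, k j) ⟶ (j', k')) (y j)) := by
    intro j j' f
    have t : (f, g j) =
        (((f, 𝟙 (k j)) : (j, k j) ⟶ (j', k j)) ≫ (𝟙 j', g j) : (j, k j) ⟶ (j', k')) := by
      simp only [id_comp, comp_id, prod_comp]
    erw [Colimit.w_apply, t, FunctorToTypes.map_comp_apply, Colimit.w_apply, e,
      ← Limit.w_apply f, ← e]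
    simp only [Functor.comp_map, Types.Colimit.ι_map_apply, Functor.curry_obj_map_app, colim_map, colimit.ι_map_apply]
  simp_rw [Types.FilteredColimit.colimit_eq_iff] at w
  let kf : ∀ {j j'} (_ : j ⟶ j'), K := fun f => (w f).choose
  let gf : ∀ {j j'} (f : j ⟶ j'), k' ⟶ kf f := fun f => (w f).choose_spec.choose
  let hf : ∀ {j j'} (f : j ⟶ j'), k' ⟶ kf f := fun f =>
    (w f).choose_spec.choose_spec.choose
  have wf : ∀ {j j'} (f : j ⟶ j'),
      F.map ((𝟙 j', g j' ≫ gf f) : (j', k j') ⟶ (j', kf f)) (y j') =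
        F.map ((f, g j ≫ hf f) : (j, k j) ⟶ (j', kf f)) (y j) := fun {j j'} f => by
    have q :
      ((Functor.curry.obj F).obj j').map (gf f) (F.map ((𝟙 j', g j') : (j', k j') ⟶ (j', k')) (y j')) =
        ((Functor.curry.obj F).obj j').map (hf f) (F.map ((f, g j) : (j, k j) ⟶ (j', k')) (y j)) :=
      (w f).choose_spec.choose_spec.choose_spec
    rw [Functor.curry_obj_obj_map, Functor.curry_obj_obj_map] at q
    simp_rw [← FunctorToTypes.map_comp_apply, CategoryStruct.comp] at q
    simpa only [comp_id] using q
  clear_value kf gf hf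
  clear w
  have hcard2 : #(insert k' (Set.range fun p : Σ a b : J, a ⟶ b => kf p.2.2) : Set K) < κ := by
    have h1 : #(Set.range fun p : Σ a b : J, a ⟶ b => kf p.2.2) < κ :=
      lt_of_le_of_lt mk_range_le hJ
    have h2 : (1 : Cardinal) < κ := one_lt_aleph0.trans_le hκ.aleph0_le
    exact mk_insert_le.trans_lt (add_lt_of_lt hκ.aleph0_le h1 h2)
  obtain ⟨k'', hk''⟩ := hdir _ hcard2
  have i : ∀ {j j'} (f : j ⟶ j'), kf f ⟶ k'' := fun {j j'} f =>
    (hk'' (kf f) (Set.mem_insert_iff.mpr (Or.inr ⟨⟨j, j', f⟩, rfl⟩))).some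
  have t' : k' ⟶ k'' := (hk'' k' (Set.mem_insert _ _)).some
  fconstructor
  · apply colimit.ι (Functor.curry.obj (CategoryTheory.Prod.swap K J ⋙ F) ⋙ Limits.lim) k'' _
    dsimp
    apply Limit.mk
    swap
    · exact fun j => F.map ((𝟙 j, g j ≫ t') : (j, k j) ⟶ (j, k'')) (y j)
    · dsimp
      intro j j' f
      have m1 : (((𝟙 j, g j ≫ t') : (j, k j) ⟶ (j, k'')) ≫
          ((f, 𝟙 k'') : (j, k'') ⟶ (j', k'')) : (j, k j) ⟶ (j', k'')) =
          ((f, g j ≫ t') : (j, k j) ⟶ (j', k'')) := by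
        rw [prod_comp]
        simp
      have m2 : (((f, g j ≫ hf f) : (j, k j) ⟶ (j', kf f)) ≫
          ((𝟙 j', i f) : (j', kf f) ⟶ (j', k'')) : (j, k j) ⟶ (j', k'')) =
          ((f, g j ≫ t') : (j, k j) ⟶ (j', k'')) := by
        rw [prod_comp, comp_id]
        haveI := thin (k j) k''
        exact congrArg _ (Subsingleton.elim _ _)
      have m3 : (((𝟙 j', g j' ≫ gf f) : (j', k j') ⟶ (j', kf f)) ≫
          ((𝟙 j', i f) : (j', kf f) ⟶ (j', k'')) : (j', k j') ⟶ (j', k'')) =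
          ((𝟙 j', g j' ≫ t') : (j', k j') ⟶ (j', k'')) := by
        rw [prod_comp, comp_id]
        haveI := thin (k j') k''
        exact congrArg _ (Subsingleton.elim _ _)
      rw [← FunctorToTypes.map_comp_apply, m1, ← m2, FunctorToTypes.map_comp_apply,
        ← wf f, ← FunctorToTypes.map_comp_apply, m3]
  · apply limit_ext
    intro j
    simp only [id, ← e, Limits.ι_colimitLimitToLimitColimit_π_apply, Types.FilteredColimit.colimit_eq_iff,
      Functor.curry_obj_obj_map, Functor.comp_obj, colim_obj, Limit.π_mk]
    refine ⟨k'', 𝟙 k'', g j ≫ t', ?_⟩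
    erw [Bifunctor.map_id_comp, Bifunctor.map_id, types_id_apply]

include hκ thin hdir hJ in
theorem isIso_cltlc : IsIso (colimitLimitToLimitColimit F) :=
  (isIso_iff_bijective _).mpr ⟨inj hκ thin hdir hJ F, surj hκ thin hdir hJ F⟩

include hκ thin hdir hJ in
theorem cone_iso (G : J ⥤ K ⥤ Type) : IsIso (colimitLimitToLimitColimitCone G) := by
  haveI := isFiltered_of_dir hκ thin hdir
  haveI := isIso_cltlc hκ thin hdir hJ (Functor.uncurry.obj G)
  have : IsIso (colimitLimitToLimitColimitCone G).hom := by
    suffices IsIso (colimitLimitToLimitColimit (Functor.uncurry.obj G) ≫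
        lim.map (Functor.whiskerRight (Functor.currying.unitIso.app G).inv colim)) by
      apply IsIso.comp_isIso
    infer_instance
  apply Cones.cone_iso_of_hom_iso

include hκ thin hdir hJ in
theorem preserves_colim : PreservesLimitsOfShape J (colim : (K ⥤ Type) ⥤ Type) := by
  haveI := isFiltered_of_dir hκ thin hdir
  refine ⟨fun {G} => ⟨fun {c} hc => ⟨IsLimit.ofIsoLimit (limit.isLimit _) ?_⟩⟩⟩
  haveI := cone_iso hκ thin hdir hJ G
  symm
  trans colim.mapCone (limit.cone G)
  · exact Functor.mapIso _ (hc.uniqueUpToIso (limit.isLimit G))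
  · exact asIso (colimitLimitToLimitColimitCone G)

end Core

noncomputable section Plus

open Opposite

variable {D : Type} [SmallCategory D] {J : GrothendieckTopology D}
variable {K : Type} [SmallCategory K]
variable [∀ X : D, PreservesLimitsOfShape K (colim : ((J.Cover X)ᵒᵖ ⥤ Type) ⥤ Type)]

/-- copy of `liftToPlusObjLimitObj` from Mathlib's LeftExact, for `Type`, with
`FinCategory K` replaced by a commutation instance. -/
def liftToPlusObjLimitObj' (F : K ⥤ Dᵒᵖ ⥤ Type) (X : D)
    (S : Cone (F ⋙ J.plusFunctor (Type) ⋙ (evaluation Dᵒᵖ (Type)).obj (op X))) :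
    S.pt ⟶ (J.plusObj (limit F)).obj (op X) :=
  let e := colimitLimitIso (F ⋙ J.diagramFunctor (Type) X)
  let t : J.diagram (limit F) X ≅ limit (F ⋙ J.diagramFunctor (Type) X) :=
    (isLimitOfPreserves (J.diagramFunctor (Type) X) (limit.isLimit F)).conePointUniqueUpToIso
      (limit.isLimit _)
  let p : (J.plusObj (limit F)).obj (op X) ≅ colimit (limit (F ⋙ J.diagramFunctor (Type) X)) :=
    HasColimit.isoOfNatIso t
  let s :
    colimit (F ⋙ J.diagramFunctor (Type) X).flip ≅
      F ⋙ J.plusFunctor (Type) ⋙ (evaluation Dᵒᵖ (Type)).obj (op X) :=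
    NatIso.ofComponents (fun k => colimitObjIsoColimitCompEvaluation _ k)
      (by
        intro i j f
        erw [← Iso.eq_comp_inv, Category.assoc, ← Iso.inv_comp_eq]
        refine colimit.hom_ext (fun w => ?_)
        dsimp [GrothendieckTopology.plusMap]
        erw [colimit.ι_map_assoc,
          colimitObjIsoColimitCompEvaluation_ι_inv (F ⋙ J.diagramFunctor (Type) X).flip w j,
          colimitObjIsoColimitCompEvaluation_ι_inv_assoc (F ⋙ J.diagramFunctor (Type) X).flip w i]
        rw [← (colimit.ι (F ⋙ J.diagramFunctor (Type) X).flip w).naturality]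
        rfl)
  limit.lift _ S ≫ (HasLimit.isoOfNatIso s.symm).hom ≫ e.inv ≫ p.inv

instance preservesLimitsOfShape_plusFunctor' :
    PreservesLimitsOfShape K (J.plusFunctor (Type)) := by
  apply preservesLimitsOfShape_of_evaluation; intro X
  exact preservesLimitsOfShape_of_natIso
    (show J.diagramFunctor (Type) X.unop ⋙ colim ≅ J.plusFunctor (Type) ⋙ (evaluation Dᵒᵖ (Type)).obj X from
      NatIso.ofComponents (fun _ => Iso.refl _) (by intros; rfl))

instance preservesLimitsOfShape_sheafification' :
    PreservesLimitsOfShape K (J.sheafification (Type)) :=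
  Limits.comp_preservesLimitsOfShape _ _

end Plus

section Assemble

variable {κ : Cardinal.{0}} (hκ : κ.IsRegular)
variable {D : Type} [SmallCategory D] (J : GrothendieckTopology D)
variable {K : Type} [SmallCategory K]

include hκ in
theorem colim_cover_preserves
    (hfilt : ∀ (X : D) (S : Set (Sieve X)), (∀ T ∈ S, T ∈ J X) → #S < κ →
      ∃ R ∈ J X, ∀ T ∈ S, R ≤ T)
    (hK : #(Σ a b : K, a ⟶ b) < κ) (X : D) :
    PreservesLimitsOfShape K (colim : ((J.Cover X)ᵒᵖ ⥤ Type) ⥤ Type) := by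
  refine preserves_colim hκ (fun a b => ?thin) (fun s hs => ?hdir) hK
  case thin =>
    exact ⟨fun f g => Quiver.Hom.unop_inj (Subsingleton.elim _ _)⟩
  case hdir =>
    obtain ⟨R, hR, hle⟩ := hfilt X ((fun T : (J.Cover X)ᵒᵖ => (T.unop.1 : Sieve X)) '' s)
      (by rintro T ⟨a, _, rfl⟩; exact a.unop.2)
      (lt_of_le_of_lt mk_image_le hs)
    refine ⟨Opposite.op ⟨R, hR⟩, fun j hj => ⟨?_⟩⟩
    exact (homOfLE (show (⟨R, hR⟩ : J.Cover X) ≤ j.unop from hle _ ⟨j, hj, rfl⟩)).op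

theorem yoneda_preserves_shape : PreservesLimitsOfShape K (yoneda : D ⥤ Dᵒᵖ ⥤ Type) :=
  preservesLimitsOfShape_of_evaluation _ _ (fun X =>
    preservesLimitsOfShape_of_natIso
      (show coyoneda.obj X ≅ yoneda ⋙ (evaluation Dᵒᵖ (Type)).obj X from
        NatIso.ofComponents (fun _ => Iso.refl _) (by intros; rfl)))

end Assemble

end AyAux

open AyAux

/-- Let `F : C ⥤ D` be a functor between small categories having all limits of size
`< κ`, preserving them, and let `J` be a Grothendieck topology on `D` such that on
every object the poset of covering sieves is `κ`-filtered under refinement (every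
family of `< κ` covering sieves admits a common covering refinement); the
plus-construction is then computed by `κ`-filtered colimits over covering sieves.
Then the composite `ay : D ⥤ Sh(D, J)` of the Yoneda embedding with sheafification
preserves all limits of size `< κ`. -/
theorem ay_preserves_small_limits
    (κ : Cardinal.{0}) (hκ : κ.IsRegular)
    (C D : Type) [SmallCategory C] [SmallCategory D]
    (hlimC : ∀ (K : Type) (_ : SmallCategory K), #(Σ a b : K, a ⟶ b) < κ →
      HasLimitsOfShape K C)
    (hlimD : ∀ (K : Type) (_ : SmallCategory K), #(Σ a b : K, a ⟶ b) < κ →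
      HasLimitsOfShape K D)
    (F : C ⥤ D)
    (hF : ∀ (K : Type) (_ : SmallCategory K), #(Σ a b : K, a ⟶ b) < κ →
      Nonempty (PreservesLimitsOfShape K F))
    (J : GrothendieckTopology D)
    (hfilt : ∀ (X : D) (S : Set (Sieve X)), (∀ T ∈ S, T ∈ J X) → #S < κ →
      ∃ R ∈ J X, ∀ T ∈ S, R ≤ T) :
    ∀ (K : Type) (_ : SmallCategory K), #(Σ a b : K, a ⟶ b) < κ →
      Nonempty (PreservesLimitsOfShape K (yoneda ⋙ presheafToSheaf J (Type))) := by
  intro K _ hK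
  haveI : ∀ X : D, PreservesLimitsOfShape K (colim : ((J.Cover X)ᵒᵖ ⥤ Type) ⥤ Type) :=
    fun X => colim_cover_preserves hκ J hfilt hK X
  haveI : PreservesLimitsOfShape K (plusPlusSheaf J (Type)) := by
    constructor; intro G; constructor; intro S hS; constructor
    apply isLimitOfReflects (sheafToPresheaf J (Type))
    exact isLimitOfPreserves (J.sheafification (Type)) hS
  haveI : PreservesLimitsOfShape K (presheafToSheaf J (Type)) :=
    preservesLimitsOfShape_of_natIso (plusPlusSheafIsoPresheafToSheaf J (Type))
  haveI : PreservesLimitsOfShape K (yoneda : D ⥤ Dᵒᵖ ⥤ Type) := yoneda_preserves_shape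
  exact ⟨comp_preservesLimitsOfShape _ _⟩
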